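/- For all n ≥ 1, the dimension of the space P_↘(n) of n-ary operations of the operad P_↘ equals r_n, the number of planar rooted forests with n vertices; moreover the evaluation map p ↦ p.(•,…,•) from P_↘(n) to the linear span of planar forests of weight n is a linear bijection. -/
import Mathlib


/-- Planar rooted trees; `PTree.node []` is the single-vertex tree `•`. -/
inductive PTree : Type
  | node : List PTree → PTree

abbrev Forest : Type := List PTree

mutual
def PTree.weight : PTree → ℕ
  | .node c => 1 + Forest.weight c
def Forest.weight : Forest → ℕ
  | [] => 0
  | t :: r => PTree.weight t + Forest.weight r
end

/-- Grafting on the root: `F ↘ G` grafts `F` on the left of the root of the first tree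
of `G`. -/
def graftRoot (F : Forest) : Forest → Forest
  | [] => F
  | .node c :: rest => .node (F ++ c) :: rest

/-- Formal expressions in the two binary operations `m` and `↘` (here `g`). -/
inductive Expr : Type
  | leaf : Expr
  | m : Expr → Expr → Expr
  | g : Expr → Expr → Expr

/-- The arity (number of leaves) of an expression. -/
def Expr.arity : Expr → ℕ
  | .leaf => 1
  | .m a b => a.arity + b.arity
  | .g a b => a.arity + b.arity

/-- Evaluation of an expression at `(•, …, •)` in the `P_↘`-algebra of planar forests:
`m` is concatenation and `g` is root grafting `↘`. -/
def Expr.evalSE : Expr → Forest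
  | .leaf => [PTree.node []]
  | .m a b => a.evalSE ++ b.evalSE
  | .g a b => graftRoot a.evalSE b.evalSE

/-- The congruence generated by the defining relations of the operad `P_↘`:
`m∘(↘,I) = ↘∘(I,m)`, `m∘(m,I) = m∘(I,m)`, `↘∘(m,I) = ↘∘(I,↘)`,
together with compatibility with the operadic (tree) compositions. -/
inductive RelSE : Expr → Expr → Prop
  | rel1 (a b c : Expr) : RelSE (.m (.g a b) c) (.g a (.m b c))
  | rel2 (a b c : Expr) : RelSE (.m (.m a b) c) (.m a (.m b c))
  | rel3 (a b c : Expr) : RelSE (.g (.m a b) c) (.g a (.g b c))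
  | m_left {a a' : Expr} (b : Expr) : RelSE a a' → RelSE (.m a b) (.m a' b)
  | m_right (a : Expr) {b b' : Expr} : RelSE b b' → RelSE (.m a b) (.m a b')
  | g_left {a a' : Expr} (b : Expr) : RelSE a a' → RelSE (.g a b) (.g a' b)
  | g_right (a : Expr) {b b' : Expr} : RelSE b b' → RelSE (.g a b) (.g a b')

section Aux

theorem Expr.evalSE_ne_nil : ∀ e : Expr, e.evalSE ≠ []
  | .leaf => by simp [Expr.evalSE]
  | .m a b => by simp [Expr.evalSE, Expr.evalSE_ne_nil a]
  | .g a b => by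
    cases hb : b.evalSE with
    | nil => simpa [Expr.evalSE, graftRoot, hb] using Expr.evalSE_ne_nil a
    | cons t r => cases t; simp [Expr.evalSE, hb, graftRoot]

theorem graftRoot_append (A B C : Forest) (hB : B ≠ []) :
    graftRoot A B ++ C = graftRoot A (B ++ C) := by
  cases B with
  | nil => exact absurd rfl hB
  | cons t r => cases t; simp [graftRoot]

theorem graftRoot_graftRoot (A B C : Forest) (hC : C ≠ []) :
    graftRoot (A ++ B) C = graftRoot A (graftRoot B C) := by
  cases C with
  | nil => exact absurd rfl hC
  | cons t r => cases t; simp [graftRoot]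

theorem RelSE.eval_eq {a b : Expr} (h : RelSE a b) : a.evalSE = b.evalSE := by
  induction h with
  | rel1 a b c =>
      simp only [Expr.evalSE]
      exact graftRoot_append _ _ _ (Expr.evalSE_ne_nil b)
  | rel2 a b c => simp [Expr.evalSE]
  | rel3 a b c =>
      simp only [Expr.evalSE]
      exact graftRoot_graftRoot _ _ _ (Expr.evalSE_ne_nil c)
  | m_left b _ ih => simp [Expr.evalSE, ih]
  | m_right a _ ih => simp [Expr.evalSE, ih]
  | g_left b _ ih => simp [Expr.evalSE, ih]
  | g_right a _ ih => simp [Expr.evalSE, ih]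

theorem Relation.EqvGen.eval_eq {a b : Expr} (h : Relation.EqvGen RelSE a b) :
    a.evalSE = b.evalSE := by
  induction h with
  | rel _ _ h => exact h.eval_eq
  | refl => rfl
  | symm _ _ _ ih => exact ih.symm
  | trans _ _ _ _ _ ih1 ih2 => exact ih1.trans ih2

mutual
def encT : PTree → Expr
  | .node [] => .leaf
  | .node (t :: r) => .g (encF t r) .leaf
  termination_by t => sizeOf t
def encF : PTree → Forest → Expr
  | t, [] => encT t
  | t, u :: r => .m (encT t) (encF u r)
  termination_by t r => sizeOf t + sizeOf r
end

mutual
theorem encT_eval : ∀ t : PTree, (encT t).evalSE = [t]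
  | .node [] => by simp [encT, Expr.evalSE]
  | .node (t :: r) => by
      simp [encT, Expr.evalSE, encF_eval t r, graftRoot]
  termination_by t => sizeOf t
theorem encF_eval : ∀ (t : PTree) (r : Forest), (encF t r).evalSE = t :: r
  | t, [] => by simp [encF, encT_eval t]
  | t, u :: r => by simp [encF, Expr.evalSE, encT_eval t, encF_eval u r]
  termination_by t r => sizeOf t + sizeOf r
end

theorem EqvGen.m_left' {a a' : Expr} (b : Expr) (h : Relation.EqvGen RelSE a a') :
    Relation.EqvGen RelSE (.m a b) (.m a' b) := by
  induction h with
  | rel _ _ h => exact .rel _ _ (.m_left b h)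
  | refl => exact .refl _
  | symm _ _ _ ih => exact .symm _ _ ih
  | trans x y z _ _ ih1 ih2 => exact .trans _ _ _ ih1 ih2

theorem EqvGen.m_right' (a : Expr) {b b' : Expr} (h : Relation.EqvGen RelSE b b') :
    Relation.EqvGen RelSE (.m a b) (.m a b') := by
  induction h with
  | rel _ _ h => exact .rel _ _ (.m_right a h)
  | refl => exact .refl _
  | symm _ _ _ ih => exact .symm _ _ ih
  | trans x y z _ _ ih1 ih2 => exact .trans _ _ _ ih1 ih2

theorem EqvGen.g_left' {a a' : Expr} (b : Expr) (h : Relation.EqvGen RelSE a a') :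
    Relation.EqvGen RelSE (.g a b) (.g a' b) := by
  induction h with
  | rel _ _ h => exact .rel _ _ (.g_left b h)
  | refl => exact .refl _
  | symm _ _ _ ih => exact .symm _ _ ih
  | trans x y z _ _ ih1 ih2 => exact .trans _ _ _ ih1 ih2

theorem EqvGen.g_right' (a : Expr) {b b' : Expr} (h : Relation.EqvGen RelSE b b') :
    Relation.EqvGen RelSE (.g a b) (.g a b') := by
  induction h with
  | rel _ _ h => exact .rel _ _ (.g_right a h)
  | refl => exact .refl _
  | symm _ _ _ ih => exact .symm _ _ ih
  | trans x y z _ _ ih1 ih2 => exact .trans _ _ _ ih1 ih2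

theorem enc_concat : ∀ (t : PTree) (r : Forest) (u : PTree) (s : Forest),
    Relation.EqvGen RelSE (.m (encF t r) (encF u s)) (encF t (r ++ u :: s))
  | t, [], u, s => by
      have h1 : encF t [] = encT t := by simp [encF]
      have h2 : encF t ([] ++ u :: s) = .m (encT t) (encF u s) := by simp [encF]
      rw [h1, h2]
      exact .refl _
  | t, v :: r', u, s => by
      have h1 : encF t (v :: r') = .m (encT t) (encF v r') := by simp [encF]
      have h2 : encF t (v :: r' ++ u :: s) = .m (encT t) (encF v (r' ++ u :: s)) := by
        simp [encF]
      rw [h1, h2]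
      refine .trans _ _ _ (.rel _ _ (RelSE.rel2 (encT t) (encF v r') (encF u s))) ?_
      exact EqvGen.m_right' _ (enc_concat v r' u s)

theorem enc_graftTree (t : PTree) (r : Forest) (c : Forest) :
    Relation.EqvGen RelSE (.g (encF t r) (encT (.node c))) (encT (.node (t :: (r ++ c)))) := by
  cases c with
  | nil =>
      have h1 : encT (PTree.node ([] : Forest)) = .leaf := by simp [encT]
      have h2 : encT (.node (t :: (r ++ []))) = .g (encF t r) .leaf := by
        simp [encT]
      rw [h1, h2]
      exact .refl _
  | cons u c' =>
      have h1 : encT (.node (u :: c')) = .g (encF u c') .leaf := by simp [encT]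
      have h2 : encT (.node (t :: (r ++ u :: c'))) = .g (encF t (r ++ u :: c')) .leaf := by
        simp [encT]
      rw [h1, h2]
      refine .trans _ _ _ (.symm _ _ (.rel _ _ (RelSE.rel3 (encF t r) (encF u c') .leaf))) ?_
      exact EqvGen.g_left' _ (enc_concat t r u c')

theorem enc_graft (t : PTree) (r : Forest) (c : Forest) (s : Forest) :
    Relation.EqvGen RelSE (.g (encF t r) (encF (.node c) s))
      (encF (.node (t :: (r ++ c))) s) := by
  cases s with
  | nil =>
      have h1 : encF (PTree.node c) [] = encT (.node c) := by simp [encF]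
      have h2 : encF (.node (t :: (r ++ c))) [] = encT (.node (t :: (r ++ c))) := by
        simp [encF]
      rw [h1, h2]
      exact enc_graftTree t r c
  | cons v s' =>
      have h1 : encF (PTree.node c) (v :: s') = .m (encT (.node c)) (encF v s') := by
        simp [encF]
      have h2 : encF (.node (t :: (r ++ c))) (v :: s')
          = .m (encT (.node (t :: (r ++ c)))) (encF v s') := by simp [encF]
      rw [h1, h2]
      refine .trans _ _ _ (.symm _ _ (.rel _ _
        (RelSE.rel1 (encF t r) (encT (.node c)) (encF v s')))) ?_
      exact EqvGen.m_left' _ (enc_graftTree t r c)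

theorem expr_norm : ∀ e : Expr, ∃ (t : PTree) (r : Forest),
    e.evalSE = t :: r ∧ Relation.EqvGen RelSE e (encF t r)
  | .leaf => by
      refine ⟨.node [], [], rfl, ?_⟩
      have h1 : encF (PTree.node ([] : Forest)) [] = .leaf := by simp [encF, encT]
      rw [h1]
      exact .refl _
  | .m a b => by
      obtain ⟨ta, ra, ha, pa⟩ := expr_norm a
      obtain ⟨tb, rb, hb, pb⟩ := expr_norm b
      refine ⟨ta, ra ++ tb :: rb, by simp [Expr.evalSE, ha, hb], ?_⟩
      refine .trans _ _ _ (EqvGen.m_left' _ pa) (.trans _ _ _ (EqvGen.m_right' _ pb) ?_)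
      exact enc_concat ta ra tb rb
  | .g a b => by
      obtain ⟨ta, ra, ha, pa⟩ := expr_norm a
      obtain ⟨tb, rb, hb, pb⟩ := expr_norm b
      obtain ⟨c⟩ := tb
      refine ⟨.node (ta :: (ra ++ c)), rb, by simp [Expr.evalSE, ha, hb, graftRoot], ?_⟩
      refine .trans _ _ _ (EqvGen.g_left' _ pa) (.trans _ _ _ (EqvGen.g_right' _ pb) ?_)
      exact enc_graft ta ra c rb

theorem eval_iff (a b : Expr) : Relation.EqvGen RelSE a b ↔ a.evalSE = b.evalSE := by
  constructor
  · exact Relation.EqvGen.eval_eq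
  · intro h
    obtain ⟨ta, ra, ha, pa⟩ := expr_norm a
    obtain ⟨tb, rb, hb, pb⟩ := expr_norm b
    rw [h, hb] at ha
    have h2 : tb = ta ∧ rb = ra := by simpa using ha
    obtain ⟨rfl, rfl⟩ := h2
    exact .trans _ _ _ pa (.symm _ _ pb)

theorem weight_append : ∀ (A B : Forest),
    Forest.weight (A ++ B) = Forest.weight A + Forest.weight B
  | [], B => by simp [Forest.weight]
  | t :: r, B => by simp [Forest.weight, weight_append r B]; omega

theorem weight_graftRoot (A B : Forest) :
    Forest.weight (graftRoot A B) = Forest.weight A + Forest.weight B := by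
  cases B with
  | nil => simp [graftRoot, Forest.weight]
  | cons t r =>
      obtain ⟨c⟩ := t
      simp [graftRoot, Forest.weight, PTree.weight, weight_append]
      omega

theorem weight_eval : ∀ e : Expr, Forest.weight e.evalSE = e.arity
  | .leaf => rfl
  | .m a b => by
      simp [Expr.evalSE, Expr.arity, weight_append, weight_eval a, weight_eval b]
  | .g a b => by
      simp [Expr.evalSE, Expr.arity, weight_graftRoot, weight_eval a, weight_eval b]

def evSub (n : ℕ) (e : {e : Expr // e.arity = n}) : {F : Forest // Forest.weight F = n} :=
  ⟨e.1.evalSE, by rw [weight_eval, e.2]⟩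

def evQ (n : ℕ) :
    Quot (fun a b : {e : Expr // e.arity = n} => Relation.EqvGen RelSE a.1 b.1) →
      {F : Forest // Forest.weight F = n} :=
  Quot.lift (evSub n) (fun _ _ h => Subtype.ext h.eval_eq)

end Aux

/-- `P_↘(n)` has the equivalence classes of `n`-ary expressions as a basis; its dimension
is `r_n`, the number of planar rooted forests with `n` vertices, and evaluation at
`(•,…,•)` identifies the basis of classes with the basis of forests of weight `n`:
two expressions are equivalent iff they have the same evaluation, every nonempty
forest is an evaluation, and evaluation preserves arity/weight. -/
theorem dim_P_graftRoot_and_ev_bijective (n : ℕ) (hn : 1 ≤ n) :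
    Nat.card (Quot (fun a b : {e : Expr // e.arity = n} => Relation.EqvGen RelSE a.1 b.1)) =
      Nat.card {F : Forest // Forest.weight F = n} ∧
    (∀ a b : Expr, Relation.EqvGen RelSE a b ↔ a.evalSE = b.evalSE) ∧
    (∀ F : Forest, F ≠ [] → ∃ e : Expr, e.evalSE = F) ∧
    (∀ e : Expr, Forest.weight e.evalSE = e.arity) := by
  refine ⟨?_, eval_iff, ?_, weight_eval⟩
  · have hinj : Function.Injective (evQ n) := by
      intro x y
      induction x using Quot.ind with | _ a =>
      induction y using Quot.ind with | _ b =>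
      intro h
      exact Quot.sound ((eval_iff a.1 b.1).2 (congrArg Subtype.val h))
    have hsurj : Function.Surjective (evQ n) := by
      rintro ⟨F, hF⟩
      obtain ⟨t, r, rfl⟩ : ∃ t r, F = t :: r := by
        cases F with
        | nil => simp [Forest.weight] at hF; omega
        | cons t r => exact ⟨t, r, rfl⟩
      refine ⟨Quot.mk _ ⟨encF t r, ?_⟩, ?_⟩
      · rw [← weight_eval (encF t r), encF_eval]
        exact hF
      · exact Subtype.ext (encF_eval t r)
    exact Nat.card_congr (Equiv.ofBijective (evQ n) ⟨hinj, hsurj⟩)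
  · intro F hF
    cases F with
    | nil => exact absurd rfl hF
    | cons t r => exact ⟨encF t r, encF_eval t r⟩
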